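/- The map f : 𝔹ℂ → 𝔹ℂ given on idempotent components by a e₁ + b e₂ ↦ b̄ e₁ + a e₂ is an ℝ-algebra automorphism satisfying f⁴ = id but f² ≠ id. -/

import Mathlib

noncomputable section

/-- The bicomplex numbers, modeled via their idempotent representation as `ℂ × ℂ`
(componentwise addition and multiplication). -/
abbrev BC : Type := ℂ × ℂ

namespace BC

/-- The imaginary unit `i₁`. -/
def i1 : BC := (Complex.I, Complex.I)

/-- The imaginary unit `i₂`. -/
def i2 : BC := (-Complex.I, Complex.I)

/-- The hyperbolic unit `j₁ = i₁ i₂`. -/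
def j1 : BC := (1, -1)

/-- The idempotent `e₁ = (1 + j₁)/2`. -/
def e1 : BC := (1, 0)

/-- The idempotent `e₂ = (1 - j₁)/2`. -/
def e2 : BC := (0, 1)

/-- The embedding of `ℂ(i₁)` into the bicomplex numbers. -/
def C (z : ℂ) : BC := (z, z)

end BC

open BC

def myf : BC ≃ₐ[ℝ] BC where
  toFun := fun p => (starRingEnd ℂ p.2, p.1)
  invFun := fun p => (p.2, starRingEnd ℂ p.1)
  left_inv := fun p => by simp
  right_inv := fun p => by simp
  map_add' := fun p q => by simp [Prod.ext_iff]
  map_mul' := fun p q => by simp [Prod.ext_iff]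
  commutes' := fun r => by simp [Prod.ext_iff, Complex.conj_ofReal]

theorem myf_apply (p : BC) : myf p = (starRingEnd ℂ p.2, p.1) := rfl

/-- The map `a e₁ + b e₂ ↦ b̄ e₁ + a e₂` is an ℝ-algebra automorphism of `𝔹ℂ` with
`f⁴ = id` but `f² ≠ id`. -/
theorem stmt_14 :
    ∃ f : BC ≃ₐ[ℝ] BC,
      (∀ a b : ℂ, f (C a * e1 + C b * e2) = C (starRingEnd ℂ b) * e1 + C a * e2) ∧
      (∀ s, (⇑f)^[4] s = s) ∧ ¬ (∀ s, (⇑f)^[2] s = s) := by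
  refine ⟨myf, ?_, ?_, ?_⟩
  · intro a b
    simp [myf_apply, C, e1, e2, Prod.ext_iff]
  · intro s
    simp [myf_apply, Function.iterate_succ_apply', Prod.ext_iff]
  · intro h
    have := h (Complex.I, Complex.I)
    simp [myf_apply, Function.iterate_succ_apply', Prod.ext_iff, Complex.ext_iff] at this
    norm_num at this
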